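/- For fixed i in the twisted ring group model of the compact g₂, the operator F₁² where F₁ = ad((1,0)gᵢ) is diagonalizable with eigenvalues 0 (on the 4-dimensional span of (1,0)gᵢ, (0,1)gᵢ, (3,−1)g_{i+1}, (3,1)g_{i+3}), −1 (on the span of (1,1)g_{i+1} and (1,−1)g_{i+3}), and −1/4 (on the 8-dimensional span of (1,0)gⱼ, (0,1)gⱼ for j = i+2, i+4, i+5, i+6). In particular (1,0)gᵢ is a semisimple (ad-diagonalizable over ℂ) element. -/
import Mathlib


noncomputable section

variable (K : Type*) [Field K]

/-- The 14-dimensional space `L = ⊕_{i=1}^{7} (K×K)·gᵢ` of the twisted ring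
group model, over a field `K` (`K = ℝ` gives the model of Theorem 1, `K = ℂ`
its complexification). -/
abbrev LK : Type _ := ZMod 7 → K × K

variable {K}

/-- `σ_{i,i+1}(r,r')`. -/
def σ1 (r r' : K × K) : K × K :=
  (((r.1 - 3*r.2) * r'.1 + 3*(r.1 + r.2) * r'.2) / 4,
   ((r.2 - 3*r.1) * r'.2 - (r.1 + r.2) * r'.1) / 4)

/-- `σ_{i,i+2}(r,r')`. -/
def σ2 (r r' : K × K) : K × K :=
  ((r.1 + 3*r.2) * (r'.1 - 3*r'.2) / 4,
   -((r.1 - r.2) * (r'.1 + r'.2)) / 4)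

/-- `σ_{i,i+4}(r,r')`. -/
def σ4 (r r' : K × K) : K × K :=
  (((r.1 - 3*r.2) * r'.1 - 3*(r.1 + r.2) * r'.2) / 4,
   ((r.1 - 3*r.2) * r'.1 + (r.1 + r.2) * r'.2) / 4)

/-- The bracket `[r·gᵢ, r'·gⱼ]` of homogeneous elements, extended
antisymmetrically. -/
def brTerm (i : ZMod 7) (r : K × K) (j : ZMod 7) (r' : K × K) : LK K :=
  if j = i + 1 then Pi.single (i + 3) (σ1 r r')
  else if j = i + 2 then Pi.single (i + 6) (σ2 r r')
  else if j = i + 4 then Pi.single (i + 5) (σ4 r r')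
  else if j = i + 3 then -Pi.single (i + 1) (σ4 r' r)
  else if j = i + 5 then -Pi.single (i + 4) (σ2 r' r)
  else if j = i + 6 then -Pi.single (i + 2) (σ1 r' r)
  else 0

/-- The bilinear bracket of the twisted ring group model. -/
def bracket (x y : LK K) : LK K :=
  ∑ i : ZMod 7, ∑ j : ZMod 7, brTerm i (x i) j (y j)

lemma brTerm_addr (i : ZMod 7) (r : K × K) (j : ZMod 7) (a b : K × K) :
    brTerm i r j (a + b) = brTerm i r j a + brTerm i r j b := by
  have h1r : σ1 r (a + b) = σ1 r a + σ1 r b := by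
    simp only [σ1, Prod.mk_add_mk, Prod.ext_iff, Prod.fst_add, Prod.snd_add]
    constructor <;> ring
  have h2r : σ2 r (a + b) = σ2 r a + σ2 r b := by
    simp only [σ2, Prod.mk_add_mk, Prod.ext_iff, Prod.fst_add, Prod.snd_add]
    constructor <;> ring
  have h4r : σ4 r (a + b) = σ4 r a + σ4 r b := by
    simp only [σ4, Prod.mk_add_mk, Prod.ext_iff, Prod.fst_add, Prod.snd_add]
    constructor <;> ring
  have h1l : σ1 (a + b) r = σ1 a r + σ1 b r := by
    simp only [σ1, Prod.mk_add_mk, Prod.ext_iff, Prod.fst_add, Prod.snd_add]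
    constructor <;> ring
  have h2l : σ2 (a + b) r = σ2 a r + σ2 b r := by
    simp only [σ2, Prod.mk_add_mk, Prod.ext_iff, Prod.fst_add, Prod.snd_add]
    constructor <;> ring
  have h4l : σ4 (a + b) r = σ4 a r + σ4 b r := by
    simp only [σ4, Prod.mk_add_mk, Prod.ext_iff, Prod.fst_add, Prod.snd_add]
    constructor <;> ring
  unfold brTerm
  split_ifs <;> simp [h1r, h2r, h4r, h1l, h2l, h4l, Pi.single_add] <;> abel

lemma brTerm_smulr (i : ZMod 7) (r : K × K) (j : ZMod 7) (c : K) (a : K × K) :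
    brTerm i r j (c • a) = c • brTerm i r j a := by
  have h1r : σ1 r (c • a) = c • σ1 r a := by
    simp only [σ1, Prod.smul_mk, Prod.ext_iff, Prod.smul_fst, Prod.smul_snd, smul_eq_mul]
    constructor <;> ring
  have h2r : σ2 r (c • a) = c • σ2 r a := by
    simp only [σ2, Prod.smul_mk, Prod.ext_iff, Prod.smul_fst, Prod.smul_snd, smul_eq_mul]
    constructor <;> ring
  have h4r : σ4 r (c • a) = c • σ4 r a := by
    simp only [σ4, Prod.smul_mk, Prod.ext_iff, Prod.smul_fst, Prod.smul_snd, smul_eq_mul]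
    constructor <;> ring
  have h1l : σ1 (c • a) r = c • σ1 a r := by
    simp only [σ1, Prod.smul_mk, Prod.ext_iff, Prod.smul_fst, Prod.smul_snd, smul_eq_mul]
    constructor <;> ring
  have h2l : σ2 (c • a) r = c • σ2 a r := by
    simp only [σ2, Prod.smul_mk, Prod.ext_iff, Prod.smul_fst, Prod.smul_snd, smul_eq_mul]
    constructor <;> ring
  have h4l : σ4 (c • a) r = c • σ4 a r := by
    simp only [σ4, Prod.smul_mk, Prod.ext_iff, Prod.smul_fst, Prod.smul_snd, smul_eq_mul]
    constructor <;> ring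
  unfold brTerm
  split_ifs <;> simp [h1r, h2r, h4r, h1l, h2l, h4l, Pi.single_smul]

/-- The adjoint operator `ad x = [x, ·]` as a linear endomorphism. -/
def ad (x : LK K) : Module.End K (LK K) where
  toFun := bracket x
  map_add' y z := by
    unfold bracket
    rw [← Finset.sum_add_distrib]
    refine Finset.sum_congr rfl fun i _ => ?_
    rw [← Finset.sum_add_distrib]
    exact Finset.sum_congr rfl fun j _ => by simpa using brTerm_addr i (x i) j (y j) (z j)
  map_smul' c y := by
    unfold bracket
    simp only [RingHom.id_apply, Finset.smul_sum]
    refine Finset.sum_congr rfl fun i _ => ?_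
    exact Finset.sum_congr rfl fun j _ => by simpa using brTerm_smulr i (x i) j c (y j)

variable (K)

/-- The basis element `(1,0)gᵢ`. -/
def X (i : ZMod 7) : LK K := Pi.single i (1, 0)
/-- The basis element `(0,1)gᵢ`. -/
def Y (i : ZMod 7) : LK K := Pi.single i (0, 1)

variable {K}


lemma ad_apply (x y : LK K) : ad x y = bracket x y := rfl

lemma brTerm_zero_right (i j : ZMod 7) (r : K × K) : brTerm i r j 0 = 0 := by
  have h1 : σ1 r (0 : K × K) = 0 := by simp [σ1, Prod.ext_iff]
  have h2 : σ2 r (0 : K × K) = 0 := by simp [σ2, Prod.ext_iff]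
  have h4 : σ4 r (0 : K × K) = 0 := by simp [σ4, Prod.ext_iff]
  have h1' : σ1 (0 : K × K) r = 0 := by simp [σ1, Prod.ext_iff]
  have h2' : σ2 (0 : K × K) r = 0 := by simp [σ2, Prod.ext_iff]
  have h4' : σ4 (0 : K × K) r = 0 := by simp [σ4, Prod.ext_iff]
  unfold brTerm
  split_ifs <;> simp [h1, h2, h4, h1', h2', h4']

lemma brTerm_zero_left (i j : ZMod 7) (r : K × K) : brTerm i 0 j r = 0 := by
  have h1 : σ1 r (0 : K × K) = 0 := by simp [σ1, Prod.ext_iff]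
  have h2 : σ2 r (0 : K × K) = 0 := by simp [σ2, Prod.ext_iff]
  have h4 : σ4 r (0 : K × K) = 0 := by simp [σ4, Prod.ext_iff]
  have h1' : σ1 (0 : K × K) r = 0 := by simp [σ1, Prod.ext_iff]
  have h2' : σ2 (0 : K × K) r = 0 := by simp [σ2, Prod.ext_iff]
  have h4' : σ4 (0 : K × K) r = 0 := by simp [σ4, Prod.ext_iff]
  unfold brTerm
  split_ifs <;> simp [h1, h2, h4, h1', h2', h4']

lemma ad_single (i : ZMod 7) (a : K × K) (j : ZMod 7) (r : K × K) :
    ad (Pi.single i a : LK K) (Pi.single j r) = brTerm i a j r := by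
  rw [ad_apply]
  unfold bracket
  rw [Finset.sum_eq_single i]
  · rw [Finset.sum_eq_single j]
    · rw [Pi.single_eq_same, Pi.single_eq_same]
    · intro b _ hb
      rw [Pi.single_eq_of_ne hb, brTerm_zero_right]
    · intro h; exact absurd (Finset.mem_univ j) h
  · intro b _ hb
    refine Finset.sum_eq_zero fun j' _ => ?_
    rw [Pi.single_eq_of_ne hb, brTerm_zero_left]
  · intro h; exact absurd (Finset.mem_univ i) h

lemma shift_ne (i : ZMod 7) {a b : ZMod 7} (h : a ≠ b) : i + a ≠ i + b :=
  fun hc => h (add_left_cancel hc)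

lemma F0 (i : ZMod 7) (r : K × K) : ad (X K i) (Pi.single i r) = 0 := by
  rw [X, ad_single]
  unfold brTerm
  rw [if_neg, if_neg, if_neg, if_neg, if_neg, if_neg]
  all_goals
    first
    | rfl
    | (intro h; exact absurd (left_eq_add.mp h) (by decide))

lemma F1 (i : ZMod 7) (r : K × K) :
    ad (X K i) (Pi.single (i + 1) r) =
      Pi.single (i + 3) (((r.1 + 3*r.2)/4, -((r.1 + 3*r.2)/4)) : K × K) := by
  rw [X, ad_single]
  unfold brTerm
  rw [if_pos rfl]
  refine congrArg _ ?_
  simp only [σ1, Prod.mk.injEq]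
  constructor <;> ring

lemma F2 (i : ZMod 7) (r : K × K) :
    ad (X K i) (Pi.single (i + 2) r) =
      Pi.single (i + 6) (((r.1 - 3*r.2)/4, -((r.1 + r.2)/4)) : K × K) := by
  rw [X, ad_single]
  unfold brTerm
  rw [if_neg (shift_ne i (by decide)), if_pos rfl]
  refine congrArg _ ?_
  simp only [σ2, Prod.mk.injEq]
  constructor <;> ring

lemma F3 (i : ZMod 7) (r : K × K) :
    ad (X K i) (Pi.single (i + 3) r) =
      Pi.single (i + 1) ((-((r.1 - 3*r.2)/4), -((r.1 - 3*r.2)/4)) : K × K) := by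
  rw [X, ad_single]
  unfold brTerm
  rw [if_neg (shift_ne i (by decide)), if_neg (shift_ne i (by decide)),
    if_neg (shift_ne i (by decide)), if_pos rfl]
  rw [← Pi.single_neg]
  refine congrArg _ ?_
  simp only [σ4, Prod.neg_mk, Prod.mk.injEq]
  constructor <;> ring

lemma F4 (i : ZMod 7) (r : K × K) :
    ad (X K i) (Pi.single (i + 4) r) =
      Pi.single (i + 5) (((r.1 - 3*r.2)/4, (r.1 + r.2)/4) : K × K) := by
  rw [X, ad_single]
  unfold brTerm
  rw [if_neg (shift_ne i (by decide)), if_neg (shift_ne i (by decide)), if_pos rfl]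
  refine congrArg _ ?_
  simp only [σ4, Prod.mk.injEq]
  constructor <;> ring

lemma F5 (i : ZMod 7) (r : K × K) :
    ad (X K i) (Pi.single (i + 5) r) =
      Pi.single (i + 4) ((-((r.1 + 3*r.2)/4), (r.1 - r.2)/4) : K × K) := by
  rw [X, ad_single]
  unfold brTerm
  rw [if_neg (shift_ne i (by decide)), if_neg (shift_ne i (by decide)),
    if_neg (shift_ne i (by decide)), if_neg (shift_ne i (by decide)), if_pos rfl]
  rw [← Pi.single_neg]
  refine congrArg _ ?_
  simp only [σ2, Prod.neg_mk, Prod.mk.injEq]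
  constructor <;> ring

lemma F6 (i : ZMod 7) (r : K × K) :
    ad (X K i) (Pi.single (i + 6) r) =
      Pi.single (i + 2) ((-((r.1 - 3*r.2)/4), (r.1 + r.2)/4) : K × K) := by
  rw [X, ad_single]
  unfold brTerm
  rw [if_neg (shift_ne i (by decide)), if_neg (shift_ne i (by decide)),
    if_neg (shift_ne i (by decide)), if_neg (shift_ne i (by decide)),
    if_neg (shift_ne i (by decide)), if_pos rfl]
  rw [← Pi.single_neg]
  refine congrArg _ ?_
  simp only [σ1, Prod.neg_mk, Prod.mk.injEq]
  constructor <;> ring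

lemma smul_single (c : K) (j : ZMod 7) (v : K × K) :
    c • (Pi.single j v : LK K) = Pi.single j (c • v) :=
  (Pi.single_smul (f := fun _ : ZMod 7 => K × K) j c v).symm

lemma FF0 (i : ZMod 7) (r : K × K) :
    ad (X K i) (ad (X K i) (Pi.single i r)) = 0 := by
  rw [F0, map_zero]

section CharZero
variable [CharZero K]

lemma FF1 (i : ZMod 7) (r : K × K) :
    ad (X K i) (ad (X K i) (Pi.single (i + 1) r)) =
      Pi.single (i + 1) ((-((r.1 + 3*r.2)/4), -((r.1 + 3*r.2)/4)) : K × K) := by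
  rw [F1, F3]
  refine congrArg _ ?_
  simp only [Prod.mk.injEq]
  constructor <;> (field_simp; ring)

lemma FF3 (i : ZMod 7) (r : K × K) :
    ad (X K i) (ad (X K i) (Pi.single (i + 3) r)) =
      Pi.single (i + 3) ((-((r.1 - 3*r.2)/4), (r.1 - 3*r.2)/4) : K × K) := by
  rw [F3, F1]
  refine congrArg _ ?_
  simp only [Prod.mk.injEq]
  constructor <;> (field_simp; ring)

lemma FF2 (i : ZMod 7) (r : K × K) :
    ad (X K i) (ad (X K i) (Pi.single (i + 2) r)) =
      (-(1/4) : K) • (Pi.single (i + 2) r : LK K) := by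
  rw [F2, F6, smul_single]
  refine congrArg _ ?_
  rw [Prod.ext_iff]
  simp only [Prod.smul_fst, Prod.smul_snd, smul_eq_mul]
  constructor <;> (field_simp; ring)

lemma FF4 (i : ZMod 7) (r : K × K) :
    ad (X K i) (ad (X K i) (Pi.single (i + 4) r)) =
      (-(1/4) : K) • (Pi.single (i + 4) r : LK K) := by
  rw [F4, F5, smul_single]
  refine congrArg _ ?_
  rw [Prod.ext_iff]
  simp only [Prod.smul_fst, Prod.smul_snd, smul_eq_mul]
  constructor <;> (field_simp; ring)

lemma FF5 (i : ZMod 7) (r : K × K) :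
    ad (X K i) (ad (X K i) (Pi.single (i + 5) r)) =
      (-(1/4) : K) • (Pi.single (i + 5) r : LK K) := by
  rw [F5, F4, smul_single]
  refine congrArg _ ?_
  rw [Prod.ext_iff]
  simp only [Prod.smul_fst, Prod.smul_snd, smul_eq_mul]
  constructor <;> (field_simp; ring)

lemma FF6 (i : ZMod 7) (r : K × K) :
    ad (X K i) (ad (X K i) (Pi.single (i + 6) r)) =
      (-(1/4) : K) • (Pi.single (i + 6) r : LK K) := by
  rw [F6, F2, smul_single]
  refine congrArg _ ?_
  rw [Prod.ext_iff]
  simp only [Prod.smul_fst, Prod.smul_snd, smul_eq_mul]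
  constructor <;> (field_simp; ring)

end CharZero

lemma single_eq_zero_of (j : ZMod 7) {v : K × K} (h : v = 0) :
    (Pi.single j v : LK K) = 0 := by rw [h, Pi.single_zero]

lemma single_decomp (j : ZMod 7) (r : K × K) :
    (Pi.single j r : LK K) = r.1 • X K j + r.2 • Y K j := by
  rw [X, Y, smul_single, smul_single, ← Pi.single_add]
  refine congrArg _ ?_
  rw [Prod.ext_iff]
  simp

lemma mem_iSup_of_sq {K : Type*} [Field K] {V : Type*} [AddCommGroup V] [Module K V]
    (T : Module.End K V) (v : V) (lam : K) (hl : lam ≠ 0) (h2 : (2 : K) ≠ 0)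
    (h : T (T v) = (lam ^ 2) • v) :
    v ∈ ⨆ μ : K, Module.End.eigenspace T μ := by
  have hp : T v + lam • v ∈ Module.End.eigenspace T lam := by
    rw [Module.End.mem_eigenspace_iff, map_add, map_smul, h]
    module
  have hm : T v - lam • v ∈ Module.End.eigenspace T (-lam) := by
    rw [Module.End.mem_eigenspace_iff, map_sub, map_smul, h]
    module
  have key : (T v + lam • v) - (T v - lam • v) = (2 * lam) • v := by module
  have h2l : (2 * lam : K) ≠ 0 := mul_ne_zero h2 hl
  have hv : v = (2 * lam)⁻¹ • ((T v + lam • v) - (T v - lam • v)) := by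
    rw [key, smul_smul, inv_mul_cancel₀ h2l, one_smul]
  rw [hv]
  exact Submodule.smul_mem _ _ (Submodule.sub_mem _
    (Submodule.mem_iSup_of_mem lam hp) (Submodule.mem_iSup_of_mem (-lam) hm))
/-- in the twisted ring group model of the compact `g₂`, for each
`i` the operator `F₁²` (with `F₁ = ad((1,0)gᵢ)`) is diagonalizable with
eigenvalue `0` on `(1,0)gᵢ, (0,1)gᵢ, (3,−1)g_{i+1}, (3,1)g_{i+3}`,
eigenvalue `−1` on `(1,1)g_{i+1}, (1,−1)g_{i+3}`, and eigenvalue `−1/4` on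
`(1,0)gⱼ, (0,1)gⱼ` for `j = i+2, i+4, i+5, i+6`; in particular `(1,0)gᵢ` is a
semisimple element: its adjoint operator is diagonalizable over `ℂ`. -/
theorem stmt17 : ∀ i : ZMod 7,
    (ad (X ℝ i)) ((ad (X ℝ i)) (X ℝ i)) = 0 ∧
    (ad (X ℝ i)) ((ad (X ℝ i)) (Y ℝ i)) = 0 ∧
    (ad (X ℝ i)) ((ad (X ℝ i)) (Pi.single (i + 1) ((3 : ℝ), (-1 : ℝ)))) = 0 ∧
    (ad (X ℝ i)) ((ad (X ℝ i)) (Pi.single (i + 3) ((3 : ℝ), (1 : ℝ)))) = 0 ∧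
    (ad (X ℝ i)) ((ad (X ℝ i)) (Pi.single (i + 1) ((1 : ℝ), (1 : ℝ)))) =
      -Pi.single (i + 1) ((1 : ℝ), (1 : ℝ)) ∧
    (ad (X ℝ i)) ((ad (X ℝ i)) (Pi.single (i + 3) ((1 : ℝ), (-1 : ℝ)))) =
      -Pi.single (i + 3) ((1 : ℝ), (-1 : ℝ)) ∧
    (∀ j : ZMod 7, j = i + 2 ∨ j = i + 4 ∨ j = i + 5 ∨ j = i + 6 →
      (ad (X ℝ i)) ((ad (X ℝ i)) (X ℝ j)) = (-(1/4) : ℝ) • X ℝ j ∧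
      (ad (X ℝ i)) ((ad (X ℝ i)) (Y ℝ j)) = (-(1/4) : ℝ) • Y ℝ j) ∧
    (⨆ μ : ℝ, Module.End.eigenspace (ad (X ℝ i) ∘ₗ ad (X ℝ i)) μ) = ⊤ ∧
    (⨆ μ : ℂ, Module.End.eigenspace (ad (X ℂ i)) μ) = ⊤ := by
  intro i
  have h7 : ∀ k : ZMod 7, k = 0 ∨ k = 1 ∨ k = 2 ∨ k = 3 ∨ k = 4 ∨ k = 5 ∨ k = 6 := by decide
  refine ⟨FF0 i (1,0), FF0 i (0,1), ?_, ?_, ?_, ?_, ?_, ?_, ?_⟩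
  · rw [FF1]
    exact single_eq_zero_of _ (by norm_num [Prod.ext_iff])
  · rw [FF3]
    exact single_eq_zero_of _ (by norm_num [Prod.ext_iff])
  · rw [FF1, ← Pi.single_neg]
    refine congrArg _ ?_
    norm_num [Prod.ext_iff]
  · rw [FF3, ← Pi.single_neg]
    refine congrArg _ ?_
    norm_num [Prod.ext_iff]
  · intro j hj
    rcases hj with h | h | h | h <;> subst h
    · exact ⟨FF2 i (1,0), FF2 i (0,1)⟩
    · exact ⟨FF4 i (1,0), FF4 i (0,1)⟩
    · exact ⟨FF5 i (1,0), FF5 i (0,1)⟩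
    · exact ⟨FF6 i (1,0), FF6 i (0,1)⟩
  · -- real F₁² diagonalizable
    set T : Module.End ℝ (LK ℝ) := ad (X ℝ i) ∘ₗ ad (X ℝ i) with hT
    have mem8 : ∀ (μ : ℝ) (v : LK ℝ), ad (X ℝ i) (ad (X ℝ i) v) = μ • v →
        v ∈ ⨆ μ : ℝ, Module.End.eigenspace T μ := fun μ v h =>
      Submodule.mem_iSup_of_mem μ (Module.End.mem_eigenspace_iff.mpr h)
    have mem0 : ∀ v : LK ℝ, ad (X ℝ i) (ad (X ℝ i) v) = 0 →
        v ∈ ⨆ μ : ℝ, Module.End.eigenspace T μ := fun v h =>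
      mem8 0 v (by rw [h, zero_smul])
    refine top_unique fun x _ => ?_
    rw [← Finset.univ_sum_single x]
    refine Submodule.sum_mem _ fun j _ => ?_
    have hij : j = i + (j - i) := by ring
    have hX1 : (Pi.single (i+1) ((1:ℝ),(1:ℝ)) : LK ℝ) ∈
        ⨆ μ : ℝ, Module.End.eigenspace T μ := by
      refine mem8 (-1) _ ?_
      rw [FF1, smul_single]
      refine congrArg _ ?_
      norm_num [Prod.ext_iff]
    have hX1' : (Pi.single (i+1) ((3:ℝ),(-1:ℝ)) : LK ℝ) ∈
        ⨆ μ : ℝ, Module.End.eigenspace T μ := by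
      refine mem0 _ ?_
      rw [FF1]
      exact single_eq_zero_of _ (by norm_num [Prod.ext_iff])
    have hX3 : (Pi.single (i+3) ((1:ℝ),(-1:ℝ)) : LK ℝ) ∈
        ⨆ μ : ℝ, Module.End.eigenspace T μ := by
      refine mem8 (-1) _ ?_
      rw [FF3, smul_single]
      refine congrArg _ ?_
      norm_num [Prod.ext_iff]
    have hX3' : (Pi.single (i+3) ((3:ℝ),(1:ℝ)) : LK ℝ) ∈
        ⨆ μ : ℝ, Module.End.eigenspace T μ := by
      refine mem0 _ ?_
      rw [FF3]
      exact single_eq_zero_of _ (by norm_num [Prod.ext_iff])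
    have hsingle1 : ∀ r : ℝ × ℝ, (Pi.single (i+1) r : LK ℝ) ∈
        ⨆ μ : ℝ, Module.End.eigenspace T μ := by
      intro r
      have hd : (Pi.single (i+1) r : LK ℝ) =
          ((r.1 - r.2)/4) • (Pi.single (i+1) ((3:ℝ),(-1:ℝ)) : LK ℝ) +
          ((r.1 + 3*r.2)/4) • (Pi.single (i+1) ((1:ℝ),(1:ℝ)) : LK ℝ) := by
        rw [smul_single, smul_single, ← Pi.single_add]
        refine congrArg _ ?_
        rw [Prod.ext_iff]
        simp only [Prod.smul_fst, Prod.smul_snd, Prod.fst_add, Prod.snd_add, smul_eq_mul]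
        constructor <;> (norm_num; ring)
      rw [hd]
      exact Submodule.add_mem _ (Submodule.smul_mem _ _ hX1') (Submodule.smul_mem _ _ hX1)
    have hsingle3 : ∀ r : ℝ × ℝ, (Pi.single (i+3) r : LK ℝ) ∈
        ⨆ μ : ℝ, Module.End.eigenspace T μ := by
      intro r
      have hd : (Pi.single (i+3) r : LK ℝ) =
          ((r.1 + r.2)/4) • (Pi.single (i+3) ((3:ℝ),(1:ℝ)) : LK ℝ) +
          ((r.1 - 3*r.2)/4) • (Pi.single (i+3) ((1:ℝ),(-1:ℝ)) : LK ℝ) := by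
        rw [smul_single, smul_single, ← Pi.single_add]
        refine congrArg _ ?_
        rw [Prod.ext_iff]
        simp only [Prod.smul_fst, Prod.smul_snd, Prod.fst_add, Prod.snd_add, smul_eq_mul]
        constructor <;> (norm_num; ring)
      rw [hd]
      exact Submodule.add_mem _ (Submodule.smul_mem _ _ hX3') (Submodule.smul_mem _ _ hX3)
    rcases h7 (j - i) with h | h | h | h | h | h | h <;> rw [hij, h]
    · exact mem0 _ (by rw [add_zero]; exact FF0 i _)
    · exact hsingle1 _
    · exact mem8 (-(1/4)) _ (FF2 i _)
    · exact hsingle3 _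
    · exact mem8 (-(1/4)) _ (FF4 i _)
    · exact mem8 (-(1/4)) _ (FF5 i _)
    · exact mem8 (-(1/4)) _ (FF6 i _)
  · -- complex ad diagonalizable
    have mem9 : ∀ (μ : ℂ) (v : LK ℂ), ad (X ℂ i) v = μ • v →
        v ∈ ⨆ μ : ℂ, Module.End.eigenspace (ad (X ℂ i)) μ := fun μ v h =>
      Submodule.mem_iSup_of_mem μ (Module.End.mem_eigenspace_iff.mpr h)
    have mem0 : ∀ v : LK ℂ, ad (X ℂ i) v = 0 →
        v ∈ ⨆ μ : ℂ, Module.End.eigenspace (ad (X ℂ i)) μ := fun v h =>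
      mem9 0 v (by rw [h, zero_smul])
    have memsq : ∀ (lam : ℂ) (v : LK ℂ), lam ≠ 0 →
        ad (X ℂ i) (ad (X ℂ i) v) = (lam ^ 2) • v →
        v ∈ ⨆ μ : ℂ, Module.End.eigenspace (ad (X ℂ i)) μ := fun lam v hl h =>
      mem_iSup_of_sq (ad (X ℂ i)) v lam hl two_ne_zero h
    have hI2 : Complex.I / 2 ≠ 0 := div_ne_zero Complex.I_ne_zero two_ne_zero
    have hI2sq : ((Complex.I / 2) ^ 2 : ℂ) = -(1/4) := by
      rw [div_pow, Complex.I_sq]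
      norm_num
    have hqu : ∀ (k : ZMod 7) (r : ℂ × ℂ),
        ad (X ℂ i) (ad (X ℂ i) (Pi.single (i + k) r)) = (-(1/4) : ℂ) • (Pi.single (i + k) r : LK ℂ) →
        (Pi.single (i + k) r : LK ℂ) ∈ ⨆ μ : ℂ, Module.End.eigenspace (ad (X ℂ i)) μ := by
      intro k r h
      exact memsq (Complex.I / 2) _ hI2 (by rw [hI2sq]; exact h)
    have hX1 : (Pi.single (i+1) ((1:ℂ),(1:ℂ)) : LK ℂ) ∈
        ⨆ μ : ℂ, Module.End.eigenspace (ad (X ℂ i)) μ := by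
      refine memsq Complex.I _ Complex.I_ne_zero ?_
      rw [FF1, Complex.I_sq, smul_single]
      refine congrArg _ ?_
      norm_num [Prod.ext_iff]
    have hX1' : (Pi.single (i+1) ((3:ℂ),(-1:ℂ)) : LK ℂ) ∈
        ⨆ μ : ℂ, Module.End.eigenspace (ad (X ℂ i)) μ := by
      refine mem0 _ ?_
      rw [F1]
      exact single_eq_zero_of _ (by norm_num [Prod.ext_iff])
    have hX3 : (Pi.single (i+3) ((1:ℂ),(-1:ℂ)) : LK ℂ) ∈
        ⨆ μ : ℂ, Module.End.eigenspace (ad (X ℂ i)) μ := by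
      refine memsq Complex.I _ Complex.I_ne_zero ?_
      rw [FF3, Complex.I_sq, smul_single]
      refine congrArg _ ?_
      norm_num [Prod.ext_iff]
    have hX3' : (Pi.single (i+3) ((3:ℂ),(1:ℂ)) : LK ℂ) ∈
        ⨆ μ : ℂ, Module.End.eigenspace (ad (X ℂ i)) μ := by
      refine mem0 _ ?_
      rw [F3]
      exact single_eq_zero_of _ (by norm_num [Prod.ext_iff])
    have hsingle1 : ∀ r : ℂ × ℂ, (Pi.single (i+1) r : LK ℂ) ∈
        ⨆ μ : ℂ, Module.End.eigenspace (ad (X ℂ i)) μ := by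
      intro r
      have hd : (Pi.single (i+1) r : LK ℂ) =
          ((r.1 - r.2)/4) • (Pi.single (i+1) ((3:ℂ),(-1:ℂ)) : LK ℂ) +
          ((r.1 + 3*r.2)/4) • (Pi.single (i+1) ((1:ℂ),(1:ℂ)) : LK ℂ) := by
        rw [smul_single, smul_single, ← Pi.single_add]
        refine congrArg _ ?_
        rw [Prod.ext_iff]
        simp only [Prod.smul_fst, Prod.smul_snd, Prod.fst_add, Prod.snd_add, smul_eq_mul]
        constructor <;> (norm_num; ring)
      rw [hd]
      exact Submodule.add_mem _ (Submodule.smul_mem _ _ hX1') (Submodule.smul_mem _ _ hX1)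
    have hsingle3 : ∀ r : ℂ × ℂ, (Pi.single (i+3) r : LK ℂ) ∈
        ⨆ μ : ℂ, Module.End.eigenspace (ad (X ℂ i)) μ := by
      intro r
      have hd : (Pi.single (i+3) r : LK ℂ) =
          ((r.1 + r.2)/4) • (Pi.single (i+3) ((3:ℂ),(1:ℂ)) : LK ℂ) +
          ((r.1 - 3*r.2)/4) • (Pi.single (i+3) ((1:ℂ),(-1:ℂ)) : LK ℂ) := by
        rw [smul_single, smul_single, ← Pi.single_add]
        refine congrArg _ ?_
        rw [Prod.ext_iff]
        simp only [Prod.smul_fst, Prod.smul_snd, Prod.fst_add, Prod.snd_add, smul_eq_mul]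
        constructor <;> (norm_num; ring)
      rw [hd]
      exact Submodule.add_mem _ (Submodule.smul_mem _ _ hX3') (Submodule.smul_mem _ _ hX3)
    refine top_unique fun x _ => ?_
    rw [← Finset.univ_sum_single x]
    refine Submodule.sum_mem _ fun j _ => ?_
    have hij : j = i + (j - i) := by ring
    rcases h7 (j - i) with h | h | h | h | h | h | h <;> rw [hij, h]
    · exact mem0 _ (by rw [add_zero]; exact F0 i _)
    · exact hsingle1 _
    · exact hqu 2 _ (FF2 i _)
    · exact hsingle3 _
    · exact hqu 4 _ (FF4 i _)
    · exact hqu 5 _ (FF5 i _)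
    · exact hqu 6 _ (FF6 i _)

end
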